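/- Let (Λ₀, Λ) be a finitely aligned relative category of paths, and let ζ be a zigzag all of whose entries lie in Λ₀. Then φ_ζ is a finite union of maps of the form (γ·) ∘ σ^δ with γ, δ ∈ Λ₀: there exist finitely many pairs (γ₁, δ₁), …, (γ_k, δ_k) ∈ Λ₀ × Λ₀ with s(γᵢ) = s(δᵢ) for each i, such that A(ζ) = ⋃ᵢ δᵢΛ and φ_ζ(δᵢβ) = γᵢβ for every i and every β ∈ s(δᵢ)Λ. -/

import Mathlib

universe u v

/-- A category of paths: a small category (objects identified with identity
morphisms) with left and right cancellation and no inverses. -/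
structure CategoryOfPaths (Λ : Type u) where
  s : Λ → Λ
  r : Λ → Λ
  comp : Λ → Λ → Λ
  s_comp : ∀ {α β : Λ}, s α = r β → s (comp α β) = s β
  r_comp : ∀ {α β : Λ}, s α = r β → r (comp α β) = r α
  comp_assoc : ∀ {α β γ : Λ}, s α = r β → s β = r γ →
    comp (comp α β) γ = comp α (comp β γ)
  id_comp : ∀ α : Λ, comp (r α) α = α
  comp_id : ∀ α : Λ, comp α (s α) = α
  s_r : ∀ α : Λ, s (r α) = r α
  r_r : ∀ α : Λ, r (r α) = r α
  r_s : ∀ α : Λ, r (s α) = s α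
  s_s : ∀ α : Λ, s (s α) = s α
  left_cancel : ∀ {α β γ : Λ}, s α = r β → s α = r γ → comp α β = comp α γ → β = γ
  right_cancel : ∀ {β γ α : Λ}, s β = r α → s γ = r α → comp β α = comp γ α → β = γ
  no_inverses : ∀ {α β : Λ}, s α = r β → comp α β = s β → α = s β ∧ β = s β

variable {Λ : Type u}

/-- The tail set `αΛ`. -/
def pTail (C : CategoryOfPaths Λ) (α : Λ) : Set Λ :=
  {x | ∃ β, C.s α = C.r β ∧ x = C.comp α β}

/-- `vΛ`, the paths with range `v`. -/
def pRng (C : CategoryOfPaths Λ) (w : Λ) : Set Λ := {α | C.r α = w}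

/-- `Λv`, the paths with source `v`. -/
def pSrc (C : CategoryOfPaths Λ) (w : Λ) : Set Λ := {α | C.s α = w}

/-- `[β]`, the initial segments of `β`. -/
def pSeg (C : CategoryOfPaths Λ) (β : Λ) : Set Λ := {α | β ∈ pTail C α}

/-- `α ⋔ β`. -/
def pMeets (C : CategoryOfPaths Λ) (α β : Λ) : Prop :=
  (pTail C α ∩ pTail C β).Nonempty

/-- `αE`. -/
def pMulSet (C : CategoryOfPaths Λ) (α : Λ) (E : Set Λ) : Set Λ :=
  {x | ∃ β ∈ E, C.s α = C.r β ∧ x = C.comp α β}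

/-- `σ^α(E ∩ αΛ)`, computed inside an ambient subcategory `S`. -/
def pShiftIn (C : CategoryOfPaths Λ) (S : Set Λ) (α : Λ) (E : Set Λ) : Set Λ :=
  {β | β ∈ S ∧ C.s α = C.r β ∧ C.comp α β ∈ E}

/-- `σ^α(E ∩ αΛ)`. -/
def pShift (C : CategoryOfPaths Λ) (α : Λ) (E : Set Λ) : Set Λ :=
  {β | C.s α = C.r β ∧ C.comp α β ∈ E}

/-- `⋁F`: the minimal common extensions of `F`. -/
def pMinExt (C : CategoryOfPaths Λ) (F : Set Λ) : Set Λ :=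
  {ε | (∀ α ∈ F, ε ∈ pTail C α) ∧
    ∀ γ, (∀ α ∈ F, γ ∈ pTail C α) → ε ∈ pTail C γ → γ = ε}

/-- `α ∨ β`: the minimal common extensions of `α` and `β`. -/
def pMinCE (C : CategoryOfPaths Λ) (α β : Λ) : Set Λ := pMinExt C {α, β}

/-- A subcategory of a category of paths, as a set of morphisms. -/
structure IsSubcategory (C : CategoryOfPaths Λ) (Λ₀ : Set Λ) : Prop where
  comp_mem : ∀ {α β : Λ}, α ∈ Λ₀ → β ∈ Λ₀ → C.s α = C.r β → C.comp α β ∈ Λ₀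
  s_mem : ∀ {α : Λ}, α ∈ Λ₀ → C.s α ∈ Λ₀
  r_mem : ∀ {α : Λ}, α ∈ Λ₀ → C.r α ∈ Λ₀

/-- A finitely aligned category of paths. -/
def FinitelyAligned (C : CategoryOfPaths Λ) : Prop :=
  ∀ α β : Λ, ∃ G : Set Λ, G.Finite ∧
    pTail C α ∩ pTail C β = ⋃ ε ∈ G, pTail C ε

/-- A finitely aligned relative category of paths `(Λ₀, Λ)`. -/
def RelFinitelyAligned (C : CategoryOfPaths Λ) (Λ₀ : Set Λ) : Prop :=
  (∀ α ∈ Λ₀, ∀ β ∈ Λ₀, ∃ G : Set Λ, G.Finite ∧ G ⊆ Λ₀ ∧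
      pTail C α ∩ pTail C β = ⋃ ε ∈ G, pTail C ε) ∧
  (∀ α ∈ Λ₀, pTail C α ∩ Λ₀ = pMulSet C α Λ₀)

/-- A ring of sets: contains `∅` and is closed under `∪`, `∩`, and `\`. -/
def IsSetRing {γ : Type v} (R : Set (Set γ)) : Prop :=
  ∅ ∈ R ∧ (∀ E ∈ R, ∀ F ∈ R, E ∪ F ∈ R) ∧ (∀ E ∈ R, ∀ F ∈ R, E ∩ F ∈ R) ∧
    (∀ E ∈ R, ∀ F ∈ R, E \ F ∈ R)

/-- A ring of sets on `S`: a ring of sets all of whose members are subsets of `S`. -/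
def IsSetRingOn {γ : Type v} (S : Set γ) (R : Set (Set γ)) : Prop :=
  IsSetRing R ∧ ∀ E ∈ R, E ⊆ S

/-- The ring of sets generated by a collection. -/
def setRingGen {γ : Type v} (G : Set (Set γ)) : Set (Set γ) :=
  ⋂₀ {R | IsSetRing R ∧ G ⊆ R}

/-- The ring of sets on `S` generated by a collection. -/
def setRingGenOn {γ : Type v} (S : Set γ) (G : Set (Set γ)) : Set (Set γ) :=
  ⋂₀ {R | IsSetRingOn S R ∧ G ⊆ R}

/-- A zigzag: a list of pairs `(αᵢ, βᵢ)` with `r αᵢ = r βᵢ` and `s αᵢ₊₁ = s βᵢ`. -/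
def IsZigzag (C : CategoryOfPaths Λ) (l : List (Λ × Λ)) : Prop :=
  (∀ p ∈ l, C.r p.1 = C.r p.2) ∧ l.Chain' (fun p q => C.s q.1 = C.s p.2)

/-- The (graph of the) zigzag map `φ_ζ = σ^{α₁} β₁ ⋯ σ^{αₙ} βₙ`, computed
inside an ambient subcategory `S`. -/
def zigzagRelIn (C : CategoryOfPaths Λ) (S : Set Λ) : List (Λ × Λ) → Λ → Λ → Prop
  | [], x, y => x = y ∧ x ∈ S
  | p :: rest, x, y => ∃ z, zigzagRelIn C S rest x z ∧ C.s p.2 = C.r z ∧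
      C.s p.1 = C.r y ∧ y ∈ S ∧ C.comp p.2 z = C.comp p.1 y

/-- `A(ζ)`: the domain of the zigzag map. -/
def zigzagDomIn (C : CategoryOfPaths Λ) (S : Set Λ) (l : List (Λ × Λ)) : Set Λ :=
  {x | ∃ y, zigzagRelIn C S l x y}

/-- `𝒟(Λ₀,Λ)⁰_v`: nonempty zigzag sets with entries in `Λ₀` and source `v`,
computed inside the ambient subcategory `S`. -/
def relD0 (C : CategoryOfPaths Λ) (Λ₀ S : Set Λ) (w : Λ) : Set (Set Λ) :=
  {E | E.Nonempty ∧ ∃ (l : List (Λ × Λ)) (h : l ≠ []),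
    IsZigzag C l ∧ (∀ p ∈ l, p.1 ∈ Λ₀ ∧ p.2 ∈ Λ₀) ∧
    C.s (l.getLast h).2 = w ∧ E = zigzagDomIn C S l}

/-- `𝒜(Λ₀,Λ)_v`: the ring of sets generated by the zigzag sets. -/
def relAring (C : CategoryOfPaths Λ) (Λ₀ S : Set Λ) (w : Λ) : Set (Set Λ) :=
  setRingGenOn {α | α ∈ S ∧ C.r α = w} (relD0 C Λ₀ S w)

/-- A filter in a ring of sets. -/
def IsFilterIn {γ : Type v} (R U : Set (Set γ)) : Prop :=
  U.Nonempty ∧ U ⊆ R ∧ (∀ E ∈ U, E.Nonempty) ∧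
    (∀ E ∈ U, ∀ F ∈ U, E ∩ F ∈ U) ∧ (∀ E ∈ U, ∀ F ∈ R, E ⊆ F → F ∈ U)

/-- An ultrafilter in a ring of sets: a maximal filter. -/
def IsUltrafilterIn {γ : Type v} (R U : Set (Set γ)) : Prop :=
  IsFilterIn R U ∧ ∀ V, IsFilterIn R V → U ⊆ V → V = U

/-- A filter base in a ring of sets. -/
def IsFilterBaseIn {γ : Type v} (R B : Set (Set γ)) : Prop :=
  B.Nonempty ∧ B ⊆ R ∧ (∀ E ∈ B, E.Nonempty) ∧
    ∀ E ∈ B, ∀ F ∈ B, ∃ G ∈ B, G ⊆ E ∩ F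

/-- The filter generated by a filter base. -/
def filterGenBy {γ : Type v} (R B : Set (Set γ)) : Set (Set γ) :=
  {E | E ∈ R ∧ ∃ F ∈ B, F ⊆ E}

/-- An ultrafilter base in a ring of sets. -/
def IsUltrafilterBaseIn {γ : Type v} (R B : Set (Set γ)) : Prop :=
  IsFilterBaseIn R B ∧ IsUltrafilterIn R (filterGenBy R B)

/-- A Boolean ring homomorphism defined on a ring of sets `A` with values in a
generalized Boolean algebra. -/
def IsBRHomOn {γ : Type v} {R : Type*} [GeneralizedBooleanAlgebra R]
    (A : Set (Set γ)) (ν : Set γ → R) : Prop :=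
  ν ∅ = ⊥ ∧ (∀ E ∈ A, ∀ F ∈ A, ν (E ∪ F) = ν E ⊔ ν F) ∧
    (∀ E ∈ A, ∀ F ∈ A, ν (E ∩ F) = ν E ⊓ ν F) ∧
    (∀ E ∈ A, ∀ F ∈ A, ν (E \ F) = ν E \ ν F)

/-- `𝒜_v`: the ring of sets on `vΛ` generated by the tail sets. -/
def tailRing (C : CategoryOfPaths Λ) (w : Λ) : Set (Set Λ) :=
  setRingGenOn (pRng C w) {E | ∃ α, C.r α = w ∧ E = pTail C α}

/-- A directed subset. -/
def pDirected (C : CategoryOfPaths Λ) (x : Set Λ) : Prop :=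
  ∀ α ∈ x, ∀ β ∈ x, (pTail C α ∩ pTail C β ∩ x).Nonempty

/-- A hereditary subset. -/
def pHereditary (C : CategoryOfPaths Λ) (x : Set Λ) : Prop :=
  ∀ γ ∈ x, ∀ α : Λ, γ ∈ pTail C α → α ∈ x

/-- `vΛ*`: the nonempty directed hereditary subsets of `vΛ`. -/
def lamStar (C : CategoryOfPaths Λ) (w : Λ) : Set (Set Λ) :=
  {x | x.Nonempty ∧ x ⊆ pRng C w ∧ pDirected C x ∧ pHereditary C x}

/-- `vΛ**`: the maximal directed subsets of `vΛ`. -/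
def lamStarStar (C : CategoryOfPaths Λ) (w : Λ) : Set (Set Λ) :=
  {x | x ⊆ pRng C w ∧ pDirected C x ∧
    ∀ y, y ⊆ pRng C w → pDirected C y → x ⊆ y → y = x}

/-- `αx = ⋃_{γ ∈ x} [αγ]` for `x ∈ s(α)Λ*`. -/
def pMulStar (C : CategoryOfPaths Λ) (α : Λ) (x : Set Λ) : Set Λ :=
  {δ | ∃ γ ∈ x, C.s α = C.r γ ∧ C.comp α γ ∈ pTail C δ}

/-- `𝒰_{C,0}`. -/
def UC0 (C : CategoryOfPaths Λ) (w : Λ) (x : Set Λ) : Set (Set Λ) :=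
  {E | E ∈ tailRing C w ∧ ∃ α ∈ x, pTail C α ⊆ E}

/-- `𝒰_C`. -/
def UC (C : CategoryOfPaths Λ) (w : Λ) (x : Set Λ) : Set (Set Λ) :=
  {E | E ∈ tailRing C w ∧ ∃ α ∈ x, x ∩ pTail C α ⊆ E}

/-- `X_v = vΛ*` as a type. -/
abbrev Xv (C : CategoryOfPaths Λ) (w : Λ) : Type u := {x : Set Λ // x ∈ lamStar C w}

/-- The topology on `X_v` generated by the sets `Ê`, `E ∈ 𝒜_v`. -/
def XvTop (C : CategoryOfPaths Λ) (w : Λ) : TopologicalSpace (Xv C w) :=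
  TopologicalSpace.generateFrom
    {t | ∃ E ∈ tailRing C w, t = {x : Xv C w | E ∈ UC C w x.1}}

/-- The vertices of `Λ`. -/
abbrev Vertex (C : CategoryOfPaths Λ) : Type u := {w : Λ // C.r w = w}

/-- `X`: the disjoint union of the spaces `X_v`. -/
abbrev Xtotal (C : CategoryOfPaths Λ) : Type u := Σ w : Vertex C, Xv C w.1

/-- The disjoint union topology on `X`. -/
def XtotalTop (C : CategoryOfPaths Λ) : TopologicalSpace (Xtotal C) :=
  letI : ∀ w : Vertex C, TopologicalSpace (Xv C w.1) := fun w => XvTop C w.1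
  inferInstance

/-- The boundary `∂Λ`: the closure of `Λ**` in `X`. -/
def boundarySet (C : CategoryOfPaths Λ) : Set (Xtotal C) :=
  @closure _ (XtotalTop C) {p : Xtotal C | p.2.1 ∈ lamStarStar C p.1.1}

/-- An exhaustive subset of `vΛ`. -/
def ExhaustiveAt (C : CategoryOfPaths Λ) (w : Λ) (F : Set Λ) : Prop :=
  ∀ α, C.r α = w → ∃ β ∈ F, pMeets C α β

/-- An aperiodic point of `Λ*`. -/
def pAperiodic (C : CategoryOfPaths Λ) (x : Set Λ) : Prop :=
  ∀ α ∈ x, ∀ β ∈ x, α ≠ β → pShift C α x ≠ pShift C β x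

/-- A right-aperiodic point of `wΛ*`. -/
def pRightAperiodicAt (C : CategoryOfPaths Λ) (w : Λ) (x : Set Λ) : Prop :=
  ∀ α β : Λ, C.s α = w → C.s β = w → α ≠ β → pMulStar C α x ≠ pMulStar C β x

/-- The triples `(α, β, x)` with `s α = s β` and `x ∈ s(α)Λ*`. -/
abbrev pTrip (C : CategoryOfPaths Λ) : Type u :=
  {t : Λ × Λ × Set Λ // C.s t.1 = C.s t.2.1 ∧ t.2.2 ∈ lamStar C (C.s t.1)}

/-- The groupoid equivalence relation on triples. -/
def tripRel (C : CategoryOfPaths Λ) (t t' : pTrip C) : Prop :=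
  ∃ (z : Set Λ) (δ δ' : Λ),
    z ∈ lamStar C (C.s δ) ∧ z ∈ lamStar C (C.s δ') ∧
    C.s t.1.1 = C.r δ ∧ C.s t'.1.1 = C.r δ' ∧
    t.1.2.2 = pMulStar C δ z ∧ t'.1.2.2 = pMulStar C δ' z ∧
    C.comp t.1.1 δ = C.comp t'.1.1 δ' ∧
    C.comp t.1.2.1 δ = C.comp t'.1.2.1 δ'

/-- The ultrafilter space of `𝒜(Λ₀,Λ)_v`. -/
abbrev relXv (C : CategoryOfPaths Λ) (Λ₀ : Set Λ) (w : Λ) : Type u :=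
  {U : Set (Set Λ) // IsUltrafilterIn (relAring C Λ₀ Set.univ w) U}

/-- The topology on the ultrafilter space of `𝒜(Λ₀,Λ)_v` generated by the `Ê`. -/
def relXvTop (C : CategoryOfPaths Λ) (Λ₀ : Set Λ) (w : Λ) :
    TopologicalSpace (relXv C Λ₀ w) :=
  TopologicalSpace.generateFrom
    {t | ∃ E ∈ relAring C Λ₀ Set.univ w, t = {U : relXv C Λ₀ w | E ∈ U.1}}

section Statement2Aux

variable {Λ : Type u}

lemma self_mem_pTail (C : CategoryOfPaths Λ) (α : Λ) : α ∈ pTail C α :=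
  ⟨C.s α, (C.r_s α).symm, (C.comp_id α).symm⟩

lemma zigzagRel_fun (C : CategoryOfPaths Λ) :
    ∀ (l : List (Λ × Λ)) (x y y' : Λ), zigzagRelIn C Set.univ l x y →
      zigzagRelIn C Set.univ l x y' → y = y'
  | [], _, _, _, h, h' => h.1.symm.trans h'.1
  | p :: rest, x, y, y', ⟨z, hz, _, h2, _, h3⟩, ⟨z', hz', _, h2', _, h3'⟩ => by
      have hzz : z = z' := zigzagRel_fun C rest x z z' hz hz'
      subst hzz
      exact C.left_cancel h2 h2' (h3.symm.trans h3')

lemma pFactor {C : CategoryOfPaths Λ} {Λ₀ : Set Λ}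
    (hfa : RelFinitelyAligned C Λ₀) {α ε : Λ} (hα : α ∈ Λ₀)
    (hε : ε ∈ pTail C α) (hε0 : ε ∈ Λ₀) :
    ∃ γ, γ ∈ Λ₀ ∧ C.s α = C.r γ ∧ ε = C.comp α γ := by
  have h : ε ∈ pMulSet C α Λ₀ := by
    rw [← hfa.2 α hα]; exact ⟨hε, hε0⟩
  obtain ⟨γ, hγ, h1, h2⟩ := h
  exact ⟨γ, hγ, h1, h2⟩

lemma dom_sup {C : CategoryOfPaths Λ} (l : List (Λ × Λ)) (S : Set (Λ × Λ))
    (h : ∀ q ∈ S, ∀ β : Λ, C.s q.2 = C.r β →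
      zigzagRelIn C Set.univ l (C.comp q.2 β) (C.comp q.1 β)) :
    (⋃ q ∈ S, pTail C q.2) ⊆ zigzagDomIn C Set.univ l := by
  intro x hx
  obtain ⟨q, hq, β, hβ, rfl⟩ := Set.mem_iUnion₂.mp hx
  exact ⟨C.comp q.1 β, h q hq β hβ⟩

lemma statement2_key {C : CategoryOfPaths Λ} {Λ₀ : Set Λ}
    (hsub : IsSubcategory C Λ₀) (hfa : RelFinitelyAligned C Λ₀) :
    ∀ l : List (Λ × Λ), l ≠ [] → IsZigzag C l →
      (∀ p ∈ l, p.1 ∈ Λ₀ ∧ p.2 ∈ Λ₀) →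
      ∃ S : Set (Λ × Λ), S.Finite ∧
        (∀ q ∈ S, q.1 ∈ Λ₀ ∧ q.2 ∈ Λ₀ ∧ C.s q.1 = C.s q.2) ∧
        (∀ q ∈ S, ∀ β : Λ, C.s q.2 = C.r β →
          zigzagRelIn C Set.univ l (C.comp q.2 β) (C.comp q.1 β)) ∧
        zigzagDomIn C Set.univ l = ⋃ q ∈ S, pTail C q.2 := by
  intro l
  induction l with
  | nil => intro h; exact absurd rfl h
  | cons p rest IH =>
    intro _ hz hl
    rcases rest with _ | ⟨q', rest'⟩
    · -- base case : l = [p]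
      have hp := hl p (List.mem_singleton_self p)
      obtain ⟨G, hGfin, hGsub, hGeq⟩ := hfa.1 p.1 hp.1 p.2 hp.2
      have hGmem : ∀ ε ∈ G, ε ∈ pTail C p.1 ∧ ε ∈ pTail C p.2 := by
        intro ε hε
        have h1 : ε ∈ ⋃ ε' ∈ G, pTail C ε' :=
          Set.mem_biUnion hε (self_mem_pTail C ε)
        rw [← hGeq] at h1
        exact h1
      have hfac : ∀ ε ∈ G, ∃ gd : Λ × Λ, gd.1 ∈ Λ₀ ∧ gd.2 ∈ Λ₀ ∧
          C.s p.1 = C.r gd.1 ∧ C.s p.2 = C.r gd.2 ∧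
          ε = C.comp p.1 gd.1 ∧ ε = C.comp p.2 gd.2 := by
        intro ε hε
        obtain ⟨γ, hγ0, hγ1, hγ2⟩ := pFactor hfa hp.1 (hGmem ε hε).1 (hGsub hε)
        obtain ⟨δ, hδ0, hδ1, hδ2⟩ := pFactor hfa hp.2 (hGmem ε hε).2 (hGsub hε)
        exact ⟨(γ, δ), hγ0, hδ0, hγ1, hδ1, hγ2, hδ2⟩
      choose! f hf using hfac
      refine ⟨f '' G, hGfin.image f, ?_, ?_, ?_⟩
      · rintro q ⟨ε, hε, rfl⟩
        obtain ⟨h1, h2, h3, h4, h5, h6⟩ := hf ε hε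
        refine ⟨h1, h2, ?_⟩
        have e1 : C.s (f ε).1 = C.s ε := (C.s_comp h3).symm.trans (congrArg C.s h5).symm
        have e2 : C.s (f ε).2 = C.s ε := (C.s_comp h4).symm.trans (congrArg C.s h6).symm
        rw [e1, e2]
      · rintro q ⟨ε, hε, rfl⟩ β hβ
        obtain ⟨h1, h2, h3, h4, h5, h6⟩ := hf ε hε
        have e1 : C.s (f ε).1 = C.s ε := (C.s_comp h3).symm.trans (congrArg C.s h5).symm
        have e2 : C.s (f ε).2 = C.s ε := (C.s_comp h4).symm.trans (congrArg C.s h6).symm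
        have hβ1 : C.s (f ε).1 = C.r β := by rw [e1, ← e2]; exact hβ
        refine ⟨C.comp (f ε).2 β, ⟨rfl, trivial⟩, ?_, ?_, trivial, ?_⟩
        · rw [C.r_comp hβ]; exact h4
        · rw [C.r_comp hβ1]; exact h3
        · rw [← C.comp_assoc h4 hβ, ← C.comp_assoc h3 hβ1, ← h5, ← h6]
      · refine Set.Subset.antisymm ?_ (dom_sup _ _ ?_)
        · rintro x ⟨y, z, ⟨rfl, -⟩, hz2, hy1, -, hcomp⟩
          have hmem : C.comp p.2 x ∈ pTail C p.1 ∩ pTail C p.2 :=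
            ⟨⟨y, hy1, hcomp⟩, ⟨x, hz2, rfl⟩⟩
          rw [hGeq] at hmem
          obtain ⟨ε, hε, η, hη1, hη2⟩ := Set.mem_iUnion₂.mp hmem
          obtain ⟨h1, h2, h3, h4, h5, h6⟩ := hf ε hε
          have e2 : C.s (f ε).2 = C.s ε := (C.s_comp h4).symm.trans (congrArg C.s h6).symm
          have hδη : C.s (f ε).2 = C.r η := by rw [e2]; exact hη1
          have hx : x = C.comp (f ε).2 η := by
            refine C.left_cancel hz2 (by rw [C.r_comp hδη]; exact h4) ?_
            rw [← C.comp_assoc h4 hδη, ← h6, ← hη2]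
          exact Set.mem_biUnion ⟨ε, hε, rfl⟩ ⟨η, hδη, hx⟩
        · rintro q ⟨ε, hε, rfl⟩ β hβ
          obtain ⟨h1, h2, h3, h4, h5, h6⟩ := hf ε hε
          have e1 : C.s (f ε).1 = C.s ε := (C.s_comp h3).symm.trans (congrArg C.s h5).symm
          have e2 : C.s (f ε).2 = C.s ε := (C.s_comp h4).symm.trans (congrArg C.s h6).symm
          have hβ1 : C.s (f ε).1 = C.r β := by rw [e1, ← e2]; exact hβ
          refine ⟨C.comp (f ε).2 β, ⟨rfl, trivial⟩, ?_, ?_, trivial, ?_⟩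
          · rw [C.r_comp hβ]; exact h4
          · rw [C.r_comp hβ1]; exact h3
          · rw [← C.comp_assoc h4 hβ, ← C.comp_assoc h3 hβ1, ← h5, ← h6]
    · -- inductive step : l = p :: q' :: rest'
      set l' := q' :: rest' with hl'def
      have hz' : IsZigzag C l' :=
        ⟨fun r hr => hz.1 r (List.mem_cons_of_mem p hr),
          (List.isChain_cons_cons.mp hz.2).2⟩
      have hchain : C.s q'.1 = C.s p.2 := (List.isChain_cons_cons.mp hz.2).1
      have hl'mem : ∀ r ∈ l', r.1 ∈ Λ₀ ∧ r.2 ∈ Λ₀ :=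
        fun r hr => hl r (List.mem_cons_of_mem p hr)
      obtain ⟨S', hS'fin, hS'mem, hS'map, hS'dom⟩ :=
        IH (List.cons_ne_nil q' rest') hz' hl'mem
      have hp := hl p List.mem_cons_self
      -- for each q ∈ S', r γ = s p.2
      have hrγ : ∀ q ∈ S', C.s p.2 = C.r q.1 := by
        intro q hq
        have hrel := hS'map q hq (C.s q.2) (C.r_s _).symm
        rw [C.comp_id] at hrel
        have e : C.comp q.1 (C.s q.2) = q.1 := by
          rw [← (hS'mem q hq).2.2, C.comp_id]
        rw [e] at hrel
        obtain ⟨z0, -, -, hq1, -, -⟩ := hrel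
        rw [← hchain]; exact hq1
      -- per-q construction
      have hper : ∀ q ∈ S', ∃ T : Set (Λ × Λ), T.Finite ∧
          (∀ r ∈ T, r.1 ∈ Λ₀ ∧ r.2 ∈ Λ₀ ∧ C.s r.1 = C.s r.2) ∧
          (∀ r ∈ T, ∀ β : Λ, C.s r.2 = C.r β →
            zigzagRelIn C Set.univ (p :: l') (C.comp r.2 β) (C.comp r.1 β)) ∧
          (∀ x, x ∈ pTail C q.2 → x ∈ zigzagDomIn C Set.univ (p :: l') →
            ∃ r ∈ T, x ∈ pTail C r.2) := by
        intro q hq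
        obtain ⟨hγΛ, hδΛ, hsγδ⟩ := hS'mem q hq
        have hrγq := hrγ q hq
        have hβγΛ : C.comp p.2 q.1 ∈ Λ₀ := hsub.comp_mem hp.2 hγΛ hrγq
        obtain ⟨G, hGfin, hGsub, hGeq⟩ := hfa.1 p.1 hp.1 (C.comp p.2 q.1) hβγΛ
        have hGmem : ∀ ε ∈ G, ε ∈ pTail C p.1 ∧ ε ∈ pTail C (C.comp p.2 q.1) := by
          intro ε hε
          have h1 : ε ∈ ⋃ ε' ∈ G, pTail C ε' :=
            Set.mem_biUnion hε (self_mem_pTail C ε)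
          rw [← hGeq] at h1
          exact h1
        have hfac : ∀ ε ∈ G, ∃ gd : Λ × Λ, gd.1 ∈ Λ₀ ∧ gd.2 ∈ Λ₀ ∧
            C.s p.1 = C.r gd.1 ∧ C.s (C.comp p.2 q.1) = C.r gd.2 ∧
            ε = C.comp p.1 gd.1 ∧ ε = C.comp (C.comp p.2 q.1) gd.2 := by
          intro ε hε
          obtain ⟨γ', hγ'0, hγ'1, hγ'2⟩ := pFactor hfa hp.1 (hGmem ε hε).1 (hGsub hε)
          obtain ⟨δ', hδ'0, hδ'1, hδ'2⟩ := pFactor hfa hβγΛ (hGmem ε hε).2 (hGsub hε)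
          exact ⟨(γ', δ'), hγ'0, hδ'0, hγ'1, hδ'1, hγ'2, hδ'2⟩
        choose! f hf using hfac
        have hsγ : C.s (C.comp p.2 q.1) = C.s q.1 := C.s_comp hrγq
        have hδδ' : ∀ ε ∈ G, C.s q.2 = C.r (f ε).2 := by
          intro ε hε
          rw [← (hf ε hε).2.2.2.1, hsγ, ← hsγδ]
        -- key equalities and the mapping property
        have hmap : ∀ ε ∈ G, ∀ β : Λ, C.s (C.comp q.2 (f ε).2) = C.r β →
            zigzagRelIn C Set.univ (p :: l')
              (C.comp (C.comp q.2 (f ε).2) β) (C.comp (f ε).1 β) := by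
          intro ε hε β hβ0
          obtain ⟨h1, h2, h3, h4, h5, h6⟩ := hf ε hε
          have e1 : C.s (f ε).1 = C.s ε := (C.s_comp h3).symm.trans (congrArg C.s h5).symm
          have e2 : C.s (f ε).2 = C.s ε := (C.s_comp h4).symm.trans (congrArg C.s h6).symm
          have hβ : C.s (f ε).2 = C.r β := by
            rw [← C.s_comp (hδδ' ε hε)]; exact hβ0
          have hβ1 : C.s (f ε).1 = C.r β := by rw [e1, ← e2]; exact hβ
          have hq2 : C.s q.2 = C.r (C.comp (f ε).2 β) := by
            rw [C.r_comp hβ]; exact hδδ' ε hε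
          have hγδ'β : C.s q.1 = C.r (C.comp (f ε).2 β) := by
            rw [C.r_comp hβ, ← h4, hsγ]
          refine ⟨C.comp q.1 (C.comp (f ε).2 β), ?_, ?_, ?_, trivial, ?_⟩
          · have hassoc : C.comp (C.comp q.2 (f ε).2) β
                = C.comp q.2 (C.comp (f ε).2 β) := C.comp_assoc (hδδ' ε hε) hβ
            rw [hassoc]
            exact hS'map q hq (C.comp (f ε).2 β) hq2
          · rw [C.r_comp hγδ'β]; exact hrγq
          · rw [C.r_comp hβ1]; exact h3
          · rw [← C.comp_assoc hrγq hγδ'β,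
              ← C.comp_assoc (by rw [h4]) hβ, ← h6,
              ← C.comp_assoc h3 hβ1, ← h5]
        refine ⟨(fun ε => ((f ε).1, C.comp q.2 (f ε).2)) '' G,
          hGfin.image _, ?_, ?_, ?_⟩
        · rintro r ⟨ε, hε, rfl⟩
          obtain ⟨h1, h2, h3, h4, h5, h6⟩ := hf ε hε
          have e1 : C.s (f ε).1 = C.s ε := (C.s_comp h3).symm.trans (congrArg C.s h5).symm
          have e2 : C.s (f ε).2 = C.s ε := (C.s_comp h4).symm.trans (congrArg C.s h6).symm
          refine ⟨h1, hsub.comp_mem hδΛ h2 (hδδ' ε hε), ?_⟩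
          simp only
          rw [C.s_comp (hδδ' ε hε), e1, e2]
        · rintro r ⟨ε, hε, rfl⟩ β hβ0
          exact hmap ε hε β hβ0
        · rintro x ⟨β, hβq, rfl⟩ ⟨y, z, hzrel, hpz, hpy, -, hcomp⟩
          have hz2 : z = C.comp q.1 β := zigzagRel_fun C l' _ _ _ hzrel
            (hS'map q hq β hβq)
          subst hz2
          have hq1β : C.s q.1 = C.r β := by rw [hsγδ]; exact hβq
          have hmem : C.comp p.1 y ∈ pTail C p.1 ∩ pTail C (C.comp p.2 q.1) := by
            constructor
            · exact ⟨y, hpy, rfl⟩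
            · refine ⟨β, by rw [hsγ]; exact hq1β, ?_⟩
              rw [← hcomp, ← C.comp_assoc hrγq hq1β]
          rw [hGeq] at hmem
          obtain ⟨ε, hε, η, hη1, hη2⟩ := Set.mem_iUnion₂.mp hmem
          obtain ⟨h1, h2, h3, h4, h5, h6⟩ := hf ε hε
          have e2 : C.s (f ε).2 = C.s ε := (C.s_comp h4).symm.trans (congrArg C.s h6).symm
          have hδ'η : C.s (f ε).2 = C.r η := by rw [e2]; exact hη1
          have hβeq : β = C.comp (f ε).2 η := by
            refine C.left_cancel (by rw [hsγ]; exact hq1β)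
              (by rw [C.r_comp hδ'η, ← h4]) ?_
            rw [← C.comp_assoc (by rw [h4]) hδ'η, ← h6, ← hη2, ← hcomp,
              ← C.comp_assoc hrγq hq1β]
          refine ⟨((f ε).1, C.comp q.2 (f ε).2), ⟨ε, hε, rfl⟩, ?_⟩
          refine ⟨η, by rw [C.s_comp (hδδ' ε hε), hδ'η], ?_⟩
          rw [hβeq, ← C.comp_assoc (hδδ' ε hε) hδ'η]
      choose! T hT using hper
      refine ⟨⋃ q ∈ S', T q, hS'fin.biUnion (fun q hq => (hT q hq).1), ?_, ?_, ?_⟩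
      · rintro r hr
        obtain ⟨q, hq, hrT⟩ := Set.mem_iUnion₂.mp hr
        exact (hT q hq).2.1 r hrT
      · rintro r hr β hβ
        obtain ⟨q, hq, hrT⟩ := Set.mem_iUnion₂.mp hr
        exact (hT q hq).2.2.1 r hrT β hβ
      · refine Set.Subset.antisymm ?_ (dom_sup _ _ ?_)
        · intro x hx
          obtain ⟨y, z, hzrel, hrest⟩ := hx
          have hxl' : x ∈ zigzagDomIn C Set.univ l' := ⟨z, hzrel⟩
          rw [hS'dom] at hxl'
          obtain ⟨q, hq, hxq⟩ := Set.mem_iUnion₂.mp hxl'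
          obtain ⟨r, hrT, hxr⟩ := (hT q hq).2.2.2 x hxq
            ⟨y, z, hzrel, hrest⟩
          exact Set.mem_biUnion (Set.mem_biUnion hq hrT) hxr
        · rintro r hr β hβ
          obtain ⟨q, hq, hrT⟩ := Set.mem_iUnion₂.mp hr
          exact (hT q hq).2.2.1 r hrT β hβ

end Statement2Aux

/-- Lemma 2.3. In a finitely aligned relative category of
paths, every zigzag map with entries in `Λ₀` is a finite union of maps of the
form `γ σ^δ` with `γ, δ ∈ Λ₀`. -/
theorem statement2 {Λ : Type u} (C : CategoryOfPaths Λ) (Λ₀ : Set Λ)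
    (hsub : IsSubcategory C Λ₀) (hfa : RelFinitelyAligned C Λ₀)
    (l : List (Λ × Λ)) (hne : l ≠ []) (hz : IsZigzag C l)
    (hl : ∀ p ∈ l, p.1 ∈ Λ₀ ∧ p.2 ∈ Λ₀) :
    ∃ (k : ℕ) (γ δ : Fin k → Λ),
      (∀ i, γ i ∈ Λ₀ ∧ δ i ∈ Λ₀ ∧ C.s (γ i) = C.s (δ i)) ∧
      zigzagDomIn C Set.univ l = ⋃ i, pTail C (δ i) ∧
      (∀ i, ∀ β : Λ, C.s (δ i) = C.r β →
        zigzagRelIn C Set.univ l (C.comp (δ i) β) (C.comp (γ i) β)) := by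
  obtain ⟨S, hSfin, hSmem, hSmap, hSdom⟩ := statement2_key hsub hfa l hne hz hl
  classical
  let F := hSfin.toFinset
  have hFS : ∀ q, q ∈ F ↔ q ∈ S := fun q => hSfin.mem_toFinset
  refine ⟨F.card, fun i => (F.equivFin.symm i).1.1, fun i => (F.equivFin.symm i).1.2,
    ?_, ?_, ?_⟩
  · intro i
    exact hSmem _ ((hFS _).mp (F.equivFin.symm i).2)
  · rw [hSdom]
    ext x
    simp only [Set.mem_iUnion]
    constructor
    · rintro ⟨q, hq, hx⟩
      exact ⟨F.equivFin ⟨q, (hFS q).mpr hq⟩, by simpa using hx⟩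
    · rintro ⟨i, hx⟩
      exact ⟨_, (hFS _).mp (F.equivFin.symm i).2, hx⟩
  · intro i β hβ
    exact hSmap _ ((hFS _).mp (F.equivFin.symm i).2) β hβ
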